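/- Let f be holomorphic on Ω. Then for every integer k ≥ 0, the coefficient function a_k : 𝔻 → ℂ, defined by a_k(z₁) = the k-th Taylor coefficient at 0 of z₂ ↦ f(z₁,z₂), is holomorphic (complex differentiable) on 𝔻. -/

import Mathlib

open Metric

/-- The complete Hartogs domain `Ω = {(z₁,z₂) : z₁ ∈ 𝔻, |z₂| < e^{-ψ(z₁)}}`. -/
def HartogsDomain (ψ : ℂ → ℝ) : Set (ℂ × ℂ) :=
  {z : ℂ × ℂ | z.1 ∈ ball (0 : ℂ) 1 ∧ ‖z.2‖ < Real.exp (-ψ z.1)}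

/-- The `k`-th Taylor coefficient at `0` of the slice `z₂ ↦ f (z₁, z₂)`. -/
noncomputable def sliceCoeff (f : ℂ × ℂ → ℂ) (k : ℕ) (z₁ : ℂ) : ℂ :=
  iteratedDeriv k (fun w => f (z₁, w)) 0 / (Nat.factorial k : ℂ)

lemma hartogsDomain_isOpen (ψ : ℂ → ℝ) (hψ : ContinuousOn ψ (ball (0 : ℂ) 1)) :
    IsOpen (HartogsDomain ψ) := by
  have hV : IsOpen ((ball (0 : ℂ) 1) ×ˢ (Set.univ : Set ℂ)) :=
    isOpen_ball.prod isOpen_univ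
  have hcont : ContinuousOn (fun z : ℂ × ℂ => Real.exp (-ψ z.1) - ‖z.2‖)
      ((ball (0 : ℂ) 1) ×ˢ (Set.univ : Set ℂ)) := by
    apply ContinuousOn.sub
    · exact Real.continuous_exp.comp_continuousOn
        ((hψ.comp continuousOn_fst (fun z hz => hz.1)).neg)
    · exact (continuous_norm.comp continuous_snd).continuousOn
  have h := hcont.isOpen_inter_preimage hV (isOpen_Ioi (a := (0 : ℝ)))
  convert h using 1
  ext z
  simp only [HartogsDomain, Set.mem_setOf_eq, Set.mem_inter_iff, Set.mem_prod, Set.mem_univ,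
    and_true, Set.mem_preimage, Set.mem_Ioi, sub_pos]

/-- For `f` holomorphic on `Ω`, each coefficient function `a_k` is holomorphic on `𝔻`. -/
theorem coeff_holomorphic (ψ : ℂ → ℝ) (hψ : ContinuousOn ψ (ball (0 : ℂ) 1))
    (f : ℂ × ℂ → ℂ) (hf : DifferentiableOn ℂ f (HartogsDomain ψ)) :
    ∀ k : ℕ, DifferentiableOn ℂ (fun z₁ => sliceCoeff f k z₁) (ball (0 : ℂ) 1) := by
  intro k a ha
  have hΩ : IsOpen (HartogsDomain ψ) := hartogsDomain_isOpen ψ hψ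
  have han : ‖a‖ < 1 := by simpa [mem_ball, dist_zero_right] using ha
  set δ : ℝ := (1 - ‖a‖) / 3 with hδdef
  have hδpos : 0 < δ := by have := norm_nonneg a; simp only [hδdef]; linarith
  -- the compact "security" disc around `a`
  have hK : closedBall a (2 * δ) ⊆ ball (0 : ℂ) 1 := by
    intro z hz
    have h1 : dist z a ≤ 2 * δ := mem_closedBall.mp hz
    have h2 : ‖z‖ ≤ ‖z - a‖ + ‖a‖ := by
      simpa using norm_add_le (z - a) a
    have h3 : ‖z - a‖ = dist z a := (dist_eq_norm z a).symm
    have : ‖z‖ < 1 := by rw [h3] at h2; simp only [hδdef] at h1 ⊢; linarith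
    simpa [mem_ball, dist_zero_right] using this
  have haK : a ∈ closedBall a (2 * δ) := mem_closedBall_self (by linarith)
  -- a radius `r` that works on the whole security disc
  obtain ⟨z₀, hz₀, hmax⟩ := (isCompact_closedBall a (2 * δ)).exists_isMaxOn ⟨a, haK⟩
    (hψ.mono hK)
  set M : ℝ := ψ z₀ with hMdef
  set r : ℝ := Real.exp (-M) / 2 with hrdef
  have hrpos : 0 < r := by positivity
  have hmem : ∀ z ∈ closedBall a (2 * δ), ∀ w : ℂ, ‖w‖ ≤ r → (z, w) ∈ HartogsDomain ψ := by
    intro z hz w hw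
    refine ⟨hK hz, ?_⟩
    have h1 : ψ z ≤ M := hmax hz
    have h2 : Real.exp (-M) ≤ Real.exp (-ψ z) := Real.exp_le_exp.2 (by linarith)
    have h3 : r < Real.exp (-M) := by
      rw [hrdef]; exact half_lt_self (Real.exp_pos _)
    calc ‖w‖ = ‖w‖ := rfl
      _ ≤ r := hw
      _ < Real.exp (-M) := h3
      _ ≤ Real.exp (-ψ z) := h2
  -- differentiability of f at relevant points
  have hfd : ∀ p ∈ HartogsDomain ψ, DifferentiableAt ℂ f p := fun p hp =>
    hf.differentiableAt (hΩ.mem_nhds hp)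
  -- partial derivative in the first variable
  have hpartial : ∀ z ∈ closedBall a (2 * δ), ∀ w : ℂ, ‖w‖ ≤ r →
      HasDerivAt (fun u => f (u, w)) (fderiv ℂ f (z, w) (1, 0)) z := by
    intro z hz w hw
    have h1 : HasDerivAt (fun u : ℂ => (u, w)) ((1 : ℂ), (0 : ℂ)) z :=
      HasDerivAt.prodMk (hasDerivAt_id z) (hasDerivAt_const z w)
    exact ((hfd _ (hmem z hz w hw)).hasFDerivAt).comp_hasDerivAt z h1
  -- a uniform bound for f on the compact product set
  obtain ⟨Cf, hCf⟩ := ((isCompact_closedBall a (2 * δ)).prod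
    (isCompact_closedBall (0 : ℂ) r)).exists_bound_of_continuousOn
    (hf.continuousOn.mono (fun p hp => hmem p.1 hp.1 p.2 (mem_closedBall_zero_iff.mp hp.2)))
  -- Cauchy estimate for the partial derivative
  have hderiv_bound : ∀ z ∈ closedBall a δ, ∀ w : ℂ, ‖w‖ = r →
      ‖fderiv ℂ f (z, w) (1, 0)‖ ≤ Cf / δ := by
    intro z hz w hw
    have hsub : closedBall z δ ⊆ closedBall a (2 * δ) := by
      intro u hu
      have h1 : dist u z ≤ δ := mem_closedBall.mp hu
      have h2 : dist z a ≤ δ := mem_closedBall.mp hz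
      exact mem_closedBall.mpr ((dist_triangle u z a).trans (by linarith))
    have hg : DifferentiableOn ℂ (fun u => f (u, w)) (closedBall z δ) := by
      intro u hu
      exact ((hfd _ (hmem u (hsub hu) w hw.le)).comp u
        (DifferentiableAt.prodMk differentiableAt_id (differentiableAt_const w))).differentiableWithinAt
    have hgd : DiffContOnCl ℂ (fun u => f (u, w)) (ball z δ) :=
      (hg.mono closure_ball_subset_closedBall).diffContOnCl
    have hC : ∀ u ∈ sphere z δ, ‖f (u, w)‖ ≤ Cf := by
      intro u hu
      exact hCf (u, w) ⟨hsub (sphere_subset_closedBall hu), mem_closedBall_zero_iff.mpr hw.le⟩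
    have hd := hpartial z (hsub (mem_closedBall_self hδpos.le)) w hw.le
    have := Complex.norm_deriv_le_of_forall_mem_sphere_norm_le hδpos hgd hC
    rwa [hd.deriv] at this
  -- the circle integrand and its z-derivative
  set F : ℂ → ℝ → ℂ := fun z θ =>
    (circleMap 0 r θ * Complex.I) * ((circleMap 0 r θ)⁻¹ ^ k *
      ((circleMap 0 r θ)⁻¹ * f (z, circleMap 0 r θ))) with hFdef
  set F' : ℂ → ℝ → ℂ := fun z θ =>
    (circleMap 0 r θ * Complex.I) * ((circleMap 0 r θ)⁻¹ ^ k *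
      ((circleMap 0 r θ)⁻¹ * fderiv ℂ f (z, circleMap 0 r θ) (1, 0))) with hF'def
  have hwnorm : ∀ θ : ℝ, ‖circleMap 0 r θ‖ = r := by
    intro θ; simpa [abs_of_pos hrpos] using norm_circleMap_zero r θ
  have hwne : ∀ θ : ℝ, circleMap 0 r θ ≠ 0 := fun θ => circleMap_ne_center hrpos.ne'
  have hballK : ball a δ ⊆ closedBall a (2 * δ) := fun z hz =>
    closedBall_subset_closedBall (by linarith) (ball_subset_closedBall hz)
  -- continuity of F z in θ, for z in the security disc
  have hFcont : ∀ z ∈ closedBall a (2 * δ), Continuous (F z) := by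
    intro z hz
    have h1 : Continuous fun θ : ℝ => f (z, circleMap 0 r θ) := by
      apply hf.continuousOn.comp_continuous
        (continuous_const.prodMk (continuous_circleMap 0 r))
      intro θ
      exact hmem z hz _ (hwnorm θ).le
    have h2 : Continuous fun θ : ℝ => (circleMap 0 r θ)⁻¹ :=
      (continuous_circleMap 0 r).inv₀ hwne
    exact ((continuous_circleMap 0 r).mul continuous_const).mul
      ((h2.pow k).mul (h2.mul h1))
  -- identification of the coefficient with the circle integral, on the security disc
  have hkey : ∀ z ∈ closedBall a (2 * δ), sliceCoeff f k z =
      (2 * Real.pi * Complex.I)⁻¹ * ∫ θ in (0 : ℝ)..2 * Real.pi, F z θ := by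
    intro z hz
    set R : NNReal := ⟨r, hrpos.le⟩ with hRdef
    have hRr : (R : ℝ) = r := rfl
    have hsl : DifferentiableOn ℂ (fun w => f (z, w)) (closedBall (0 : ℂ) R) := by
      intro w hw
      have hwr : ‖w‖ ≤ r := by simpa [mem_closedBall, dist_zero_right, hRr] using hw
      exact ((hfd _ (hmem z hz w hwr)).comp w
        (DifferentiableAt.prodMk (differentiableAt_const z) differentiableAt_id)).differentiableWithinAt
    have hps : HasFPowerSeriesOnBall (fun w => f (z, w))
        (cauchyPowerSeries (fun w => f (z, w)) 0 R) 0 R :=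
      hsl.hasFPowerSeriesOnBall (by exact_mod_cast hrpos)
    have hfact := hps.factorial_smul (1 : ℂ) k
    have hiter : iteratedDeriv k (fun w => f (z, w)) 0 =
        (k.factorial : ℂ) * (cauchyPowerSeries (fun w => f (z, w)) 0 R k fun _ => (1 : ℂ)) := by
      rw [iteratedDeriv_eq_iteratedFDeriv, ← hfact, nsmul_eq_mul]
    have hne : (k.factorial : ℂ) ≠ 0 := by
      exact_mod_cast Nat.cast_ne_zero.mpr k.factorial_ne_zero
    have h1 : sliceCoeff f k z =
        (cauchyPowerSeries (fun w => f (z, w)) 0 R k fun _ => (1 : ℂ)) := by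
      rw [sliceCoeff, hiter, mul_div_cancel_left₀ _ hne]
    rw [h1, cauchyPowerSeries_apply]
    simp only [circleIntegral, deriv_circleMap, sub_zero, smul_eq_mul, one_div, hRr]
    rfl
  -- differentiate under the integral sign at `a`
  have hmeas : ∀ᶠ z in nhds a, MeasureTheory.AEStronglyMeasurable (F z)
      (MeasureTheory.volume.restrict (Set.uIoc (0 : ℝ) (2 * Real.pi))) := by
    filter_upwards [closedBall_mem_nhds a (by positivity : (0:ℝ) < 2 * δ)] with z hz
    exact ((hFcont z hz).aestronglyMeasurable).restrict
  have hFint : IntervalIntegrable (F a) MeasureTheory.volume 0 (2 * Real.pi) :=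
    (hFcont a haK).intervalIntegrable _ _
  have hF'meas : MeasureTheory.AEStronglyMeasurable (F' a)
      (MeasureTheory.volume.restrict (Set.uIoc (0 : ℝ) (2 * Real.pi))) := by
    have h1 : Measurable fun θ : ℝ => fderiv ℂ f (a, circleMap 0 r θ) := by
      exact (measurable_fderiv ℂ f).comp
        (continuous_const.prodMk (continuous_circleMap 0 r)).measurable
    have h2 : Measurable fun θ : ℝ => fderiv ℂ f (a, circleMap 0 r θ) ((1 : ℂ), (0 : ℂ)) := by
      have hev : Continuous fun L : ℂ × ℂ →L[ℂ] ℂ => L ((1 : ℂ), (0 : ℂ)) :=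
        (ContinuousLinearMap.apply ℂ ℂ ((1 : ℂ), (0 : ℂ))).continuous
      exact hev.measurable.comp h1
    have h3 : Measurable (F' a) := by
      apply Measurable.mul
      · exact ((continuous_circleMap 0 r).mul continuous_const).measurable
      · apply Measurable.mul
        · exact (((continuous_circleMap 0 r).inv₀ hwne).pow k).measurable
        · exact Measurable.mul ((continuous_circleMap 0 r).inv₀ hwne).measurable h2
    exact h3.aestronglyMeasurable.restrict
  have hbound : ∀ᵐ θ ∂MeasureTheory.volume, θ ∈ Set.uIoc (0 : ℝ) (2 * Real.pi) →
      ∀ z ∈ ball a δ, ‖F' z θ‖ ≤ r * (r⁻¹ ^ k * (r⁻¹ * (Cf / δ))) := by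
    apply MeasureTheory.ae_of_all
    intro θ _ z hz
    have hznorm : ‖F' z θ‖ = r * (r⁻¹ ^ k * (r⁻¹ *
        ‖fderiv ℂ f (z, circleMap 0 r θ) (1, 0)‖)) := by
      simp only [hF'def, norm_mul, norm_pow, norm_inv, hwnorm, Complex.norm_I, mul_one]
    rw [hznorm]
    have hb := hderiv_bound z (ball_subset_closedBall hz) (circleMap 0 r θ) (hwnorm θ)
    gcongr
  have hdiff : ∀ᵐ θ ∂MeasureTheory.volume, θ ∈ Set.uIoc (0 : ℝ) (2 * Real.pi) →
      ∀ z ∈ ball a δ, HasDerivAt (fun z => F z θ) (F' z θ) z := by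
    apply MeasureTheory.ae_of_all
    intro θ _ z hz
    have hd := hpartial z (hballK hz) (circleMap 0 r θ) (hwnorm θ).le
    exact ((hd.const_mul ((circleMap 0 r θ)⁻¹)).const_mul
      ((circleMap 0 r θ)⁻¹ ^ k)).const_mul (circleMap 0 r θ * Complex.I)
  have hmain := intervalIntegral.hasDerivAt_integral_of_dominated_loc_of_deriv_le (ball_mem_nhds a hδpos)
    hmeas hFint hF'meas hbound (intervalIntegrable_const) hdiff
  have hint : HasDerivAt (fun z => ∫ θ in (0 : ℝ)..2 * Real.pi, F z θ)
      (∫ θ in (0 : ℝ)..2 * Real.pi, F' a θ) a := hmain.2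
  have hh : DifferentiableAt ℂ
      (fun z => (2 * Real.pi * Complex.I)⁻¹ * ∫ θ in (0 : ℝ)..2 * Real.pi, F z θ) a :=
    (hint.const_mul _).differentiableAt
  have heq : (fun z₁ => sliceCoeff f k z₁) =ᶠ[nhds a]
      (fun z => (2 * Real.pi * Complex.I)⁻¹ * ∫ θ in (0 : ℝ)..2 * Real.pi, F z θ) := by
    filter_upwards [closedBall_mem_nhds a (by positivity : (0:ℝ) < 2 * δ)] with z hz
    exact hkey z hz
  exact (heq.differentiableAt_iff.mpr hh).differentiableWithinAt
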